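/- Let (x_i, y_i) ∈ ℝ² × ℝ², i = 1,…,m, be given. The following are equivalent: (1) there exist finite non-coincident cameras P₁ = (I 0) and P₂, and points w_i ∈ ℝ³, such that (P₁, P₂, {ŵ_i}) is a reconstruction of {(x_i,y_i)}; (2) there exists a fundamental matrix F associated to {(x_i,y_i)} and a nonzero vector e₂ ∈ ker(Fᵀ) such that (x_i,y_i) is ([e₂]_× F, e₂)-regular for all i = 1,…,m. -/

import Mathlib

open Matrix

noncomputable section

/-- For `u ∈ ℝⁿ`, `hat u = (u, 1)ᵀ ∈ ℝⁿ⁺¹`. -/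
def hat {n : ℕ} (u : Fin n → ℝ) : Fin (n + 1) → ℝ := Fin.snoc u 1

/-- The 3×4 matrix `(A b)` with left 3×3 block `A` and last column `b`. -/
def cam (A : Matrix (Fin 3) (Fin 3) ℝ) (b : Fin 3 → ℝ) : Matrix (Fin 3) (Fin 4) ℝ :=
  Matrix.of fun i => Fin.snoc (A i) (b i)

/-- The left 3×3 block of a 3×4 matrix. -/
def leftBlock (P : Matrix (Fin 3) (Fin 4) ℝ) : Matrix (Fin 3) (Fin 3) ℝ :=
  P.submatrix id Fin.castSucc

/-- A (projective) camera is a real 3×4 matrix of rank 3. -/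
def IsCamera (P : Matrix (Fin 3) (Fin 4) ℝ) : Prop := P.rank = 3

/-- A finite camera: the left 3×3 block is nonsingular. -/
def IsFiniteCamera (P : Matrix (Fin 3) (Fin 4) ℝ) : Prop := IsUnit (leftBlock P).det

/-- Two cameras are coincident if their camera centers agree up to a nonzero scale;
for rank-3 cameras the center is the (one-dimensional) kernel, so this says the two
cameras share a common nonzero kernel vector. -/
def Coincident (P Q : Matrix (Fin 3) (Fin 4) ℝ) : Prop :=
  ∃ c : Fin 4 → ℝ, c ≠ 0 ∧ P.mulVec c = 0 ∧ Q.mulVec c = 0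

/-- `u` is a nonzero scalar multiple of `v`. -/
def SimEq {n : ℕ} (u v : Fin n → ℝ) : Prop := ∃ c : ℝ, c ≠ 0 ∧ u = c • v

/-- The skew-symmetric matrix `[v]ₓ` with `[v]ₓ w = v × w`. -/
def skew (v : Fin 3 → ℝ) : Matrix (Fin 3) (Fin 3) ℝ :=
  !![0, -v 2, v 1; v 2, 0, -v 0; -v 1, v 0, 0]

/-- `(x, y)` is `(A, b)`-irregular. -/
def Irregular (A : Matrix (Fin 3) (Fin 3) ℝ) (b : Fin 3 → ℝ) (x y : Fin 2 → ℝ) : Prop :=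
  ((skew b * A).mulVec (hat x) = 0 ∧ Matrix.vecMul (hat y) (skew b) ≠ 0) ∨
  ((skew b * A).mulVec (hat x) ≠ 0 ∧ Matrix.vecMul (hat y) (skew b) = 0)

section Stmt14Helpers

lemma hat_ne_zero {n : ℕ} (u : Fin n → ℝ) : hat u ≠ 0 := by
  intro h
  have := congrFun h (Fin.last n)
  simp [hat] at this

lemma hat2_0 (u : Fin 2 → ℝ) : hat u 0 = u 0 := rfl
lemma hat2_1 (u : Fin 2 → ℝ) : hat u 1 = u 1 := rfl
lemma hat2_2 (u : Fin 2 → ℝ) : hat u 2 = 1 := rfl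

lemma cam_mulVec (A : Matrix (Fin 3) (Fin 3) ℝ) (b w : Fin 3 → ℝ) :
    (cam A b) *ᵥ hat w = A *ᵥ w + b := by
  funext i
  simp [cam, hat, mulVec, dotProduct, Fin.sum_univ_castSucc]
  rw [show (3 : Fin 4) = Fin.last 3 from rfl, Fin.snoc_last, Fin.snoc_last, mul_one]

lemma cam_one_zero (w : Fin 3 → ℝ) : (cam 1 0) *ᵥ hat w = w := by
  rw [cam_mulVec]; simp

lemma skew_mulVec (v w : Fin 3 → ℝ) :
    skew v *ᵥ w = ![v 1 * w 2 - v 2 * w 1, v 2 * w 0 - v 0 * w 2, v 0 * w 1 - v 1 * w 0] := by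
  funext i
  fin_cases i <;> simp [skew, mulVec, dotProduct, Fin.sum_univ_three] <;> ring

lemma skew_self (v : Fin 3 → ℝ) : skew v *ᵥ v = 0 := by
  rw [skew_mulVec]; funext i; fin_cases i <;> simp <;> ring

lemma dot_skew (b z : Fin 3 → ℝ) : b ⬝ᵥ (skew b *ᵥ z) = 0 := by
  rw [skew_mulVec]; simp [dotProduct, Fin.sum_univ_three]; ring

lemma dot_skew' (y b : Fin 3 → ℝ) : y ⬝ᵥ (skew b *ᵥ y) = 0 := by
  rw [skew_mulVec]; simp [dotProduct, Fin.sum_univ_three]; ring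

lemma vecMul_skew (y b : Fin 3 → ℝ) : Matrix.vecMul y (skew b) = skew y *ᵥ b := by
  funext j
  fin_cases j <;> simp [skew, vecMul, mulVec, dotProduct, Fin.sum_univ_three] <;> ring

lemma skew_smul (c : ℝ) (v : Fin 3 → ℝ) : skew (c • v) = c • skew v := by
  funext i j
  fin_cases i <;> fin_cases j <;> simp [skew] <;> ring

lemma skew_skew (b u : Fin 3 → ℝ) :
    skew b *ᵥ (skew b *ᵥ u) = (b ⬝ᵥ u) • b - (b ⬝ᵥ b) • u := by
  rw [skew_mulVec, skew_mulVec]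
  funext i
  fin_cases i <;> simp [dotProduct, Fin.sum_univ_three] <;> ring

lemma expand (e u w : Fin 3 → ℝ) :
    ((w ⬝ᵥ e) * (u ⬝ᵥ u)) • e + ((w ⬝ᵥ u) * (e ⬝ᵥ e)) • u
      + (w ⬝ᵥ (skew e *ᵥ u)) • (skew e *ᵥ u)
    = ((e ⬝ᵥ e) * (u ⬝ᵥ u) - (e ⬝ᵥ u) ^ 2) • w
      + ((e ⬝ᵥ u) * (u ⬝ᵥ w)) • e + ((e ⬝ᵥ u) * (e ⬝ᵥ w)) • u := by
  rw [skew_mulVec]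
  funext i
  fin_cases i <;> simp [dotProduct, Fin.sum_univ_three] <;> ring

lemma skew_kernel {b : Fin 3 → ℝ} (hb : b ≠ 0) {w : Fin 3 → ℝ}
    (h : skew b *ᵥ w = 0) : ∃ μ : ℝ, w = μ • b := by
  rw [skew_mulVec] at h
  have h0 : b 1 * w 2 - b 2 * w 1 = 0 := by simpa using congrFun h 0
  have h1 : b 2 * w 0 - b 0 * w 2 = 0 := by simpa using congrFun h 1
  have h2 : b 0 * w 1 - b 1 * w 0 = 0 := by simpa using congrFun h 2
  obtain ⟨j, hbj⟩ : ∃ j, b j ≠ 0 := by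
    by_contra hc; push_neg at hc; exact hb (funext hc)
  fin_cases j
  · have hb0 : b 0 ≠ 0 := hbj
    have e0 : w 0 = w 0 / b 0 * b 0 := by field_simp
    have e1 : w 1 = w 0 / b 0 * b 1 := by field_simp; linear_combination h2
    have e2 : w 2 = w 0 / b 0 * b 2 := by field_simp; linear_combination -h1
    refine ⟨w 0 / b 0, funext fun i => ?_⟩
    fin_cases i
    · exact e0
    · exact e1
    · exact e2
  · have hb1 : b 1 ≠ 0 := hbj
    have e0 : w 0 = w 1 / b 1 * b 0 := by field_simp; linear_combination -h2
    have e1 : w 1 = w 1 / b 1 * b 1 := by field_simp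
    have e2 : w 2 = w 1 / b 1 * b 2 := by field_simp; linear_combination h0
    refine ⟨w 1 / b 1, funext fun i => ?_⟩
    fin_cases i
    · exact e0
    · exact e1
    · exact e2
  · have hb2 : b 2 ≠ 0 := hbj
    have e0 : w 0 = w 2 / b 2 * b 0 := by field_simp; linear_combination h1
    have e1 : w 1 = w 2 / b 2 * b 1 := by field_simp; linear_combination -h0
    have e2 : w 2 = w 2 / b 2 * b 2 := by field_simp
    refine ⟨w 2 / b 2, funext fun i => ?_⟩
    fin_cases i
    · exact e0
    · exact e1
    · exact e2

lemma dot_self_ne {b : Fin 3 → ℝ} (hb : b ≠ 0) : b ⬝ᵥ b ≠ 0 := fun h =>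
  hb (dotProduct_self_eq_zero.mp h)

lemma rank_skew {b : Fin 3 → ℝ} (hb : b ≠ 0) : (skew b).rank = 2 := by
  have h3 := LinearMap.finrank_range_add_finrank_ker ((skew b).mulVecLin)
  rw [Module.finrank_fin_fun] at h3
  have hker : LinearMap.ker (skew b).mulVecLin = Submodule.span ℝ {b} := by
    ext z
    simp only [LinearMap.mem_ker, Matrix.mulVecLin_apply, Submodule.mem_span_singleton]
    constructor
    · intro hz
      obtain ⟨μ, rfl⟩ := skew_kernel hb hz
      exact ⟨μ, rfl⟩
    · rintro ⟨a, rfl⟩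
      rw [Matrix.mulVec_smul, skew_self, smul_zero]
  rw [hker, finrank_span_singleton hb] at h3
  have : (skew b).rank = Module.finrank ℝ (LinearMap.range (skew b).mulVecLin) := rfl
  omega

lemma ker_of_rank_two {F : Matrix (Fin 3) (Fin 3) ℝ} (hF : F.rank = 2) :
    ∃ t : Fin 3 → ℝ, t ≠ 0 ∧ ∀ z, F *ᵥ z = 0 → ∃ μ : ℝ, z = μ • t := by
  have h3 := LinearMap.finrank_range_add_finrank_ker F.mulVecLin
  rw [Module.finrank_fin_fun] at h3
  have hr : Module.finrank ℝ (LinearMap.range F.mulVecLin) = 2 := hF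
  have hker1 : Module.finrank ℝ (LinearMap.ker F.mulVecLin) = 1 := by omega
  obtain ⟨t, htm, ht0⟩ : ∃ t ∈ LinearMap.ker F.mulVecLin, t ≠ 0 := by
    have hne : LinearMap.ker F.mulVecLin ≠ ⊥ := by
      intro h; rw [h] at hker1; simp at hker1
    exact Submodule.exists_mem_ne_zero_of_ne_bot hne
  have hspan : Submodule.span ℝ {t} = LinearMap.ker F.mulVecLin := by
    apply Submodule.eq_of_le_of_finrank_le
    · exact Submodule.span_le.mpr (by simpa using htm)
    · rw [hker1, finrank_span_singleton ht0]
  refine ⟨t, ht0, fun z hz => ?_⟩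
  have hzk : z ∈ Submodule.span ℝ {t} := by
    rw [hspan]; simpa [LinearMap.mem_ker] using hz
  obtain ⟨μ, hμ⟩ := Submodule.mem_span_singleton.mp hzk
  exact ⟨μ, hμ.symm⟩

lemma isUnit_det_of_ker (M : Matrix (Fin 3) (Fin 3) ℝ)
    (h : ∀ z, M *ᵥ z = 0 → z = 0) : IsUnit M.det := by
  rw [isUnit_iff_ne_zero]
  intro h0
  obtain ⟨z, hz0, hz⟩ := (Matrix.exists_mulVec_eq_zero_iff).mpr h0
  exact hz0 (h z hz)

lemma quad_roots_finite (a b c : ℝ) (h : ¬(a = 0 ∧ b = 0 ∧ c = 0)) :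
    {σ : ℝ | a + b * σ + c * σ ^ 2 = 0}.Finite := by
  set p : Polynomial ℝ := Polynomial.C a + Polynomial.C b * Polynomial.X
    + Polynomial.C c * Polynomial.X ^ 2 with hp
  have hpne : p ≠ 0 := by
    intro h0
    apply h
    refine ⟨?_, ?_, ?_⟩
    · have := congrArg (fun q => Polynomial.coeff q 0) h0
      simpa [hp] using this
    · have := congrArg (fun q => Polynomial.coeff q 1) h0
      simpa [hp] using this
    · have := congrArg (fun q => Polynomial.coeff q 2) h0
      simpa [hp] using this
  apply (Polynomial.finite_setOf_isRoot hpne).subset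
  intro σ hσ
  simp only [Set.mem_setOf_eq] at hσ ⊢
  simp [Polynomial.IsRoot, hp, hσ]

theorem stmt14_fwd (m : ℕ) (x y : Fin m → Fin 2 → ℝ)
    (h : ∃ (A : Matrix (Fin 3) (Fin 3) ℝ) (b : Fin 3 → ℝ), IsUnit A.det ∧ b ≠ 0 ∧
      ∃ w : Fin m → Fin 3 → ℝ, ∀ i,
        SimEq ((cam 1 0).mulVec (hat (w i))) (hat (x i)) ∧
        SimEq ((cam A b).mulVec (hat (w i))) (hat (y i))) :
    (∃ (F : Matrix (Fin 3) (Fin 3) ℝ) (e₂ : Fin 3 → ℝ), F.rank = 2 ∧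
      (∀ i, hat (y i) ⬝ᵥ F.mulVec (hat (x i)) = 0) ∧
      e₂ ≠ 0 ∧ Fᵀ.mulVec e₂ = 0 ∧
      (∀ i, ¬ Irregular (skew e₂ * F) e₂ (x i) (y i))) := by
  obtain ⟨A, b, hA, hb, w, hw⟩ := h
  -- basic per-point facts
  have hpt : ∀ i, ∃ α β : ℝ, α ≠ 0 ∧ β ≠ 0 ∧
      α • (A *ᵥ hat (x i)) + b = β • hat (y i) := by
    intro i
    obtain ⟨⟨α, hα, hα2⟩, ⟨β, hβ, hβ2⟩⟩ := hw i
    rw [cam_one_zero] at hα2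
    rw [cam_mulVec] at hβ2
    refine ⟨α, β, hα, hβ, ?_⟩
    rw [← hβ2, hα2, Matrix.mulVec_smul]
  have hF : ∀ i, (skew b * A) *ᵥ hat (x i) = skew b *ᵥ (A *ᵥ hat (x i)) :=
    fun i => (Matrix.mulVec_mulVec _ _ _).symm
  refine ⟨skew b * A, b, ?_, ?_, hb, ?_, ?_⟩
  · rw [Matrix.rank_mul_eq_left_of_isUnit_det A (skew b) hA]
    exact rank_skew hb
  · intro i
    obtain ⟨α, β, hα, hβ, heq⟩ := hpt i
    have key : α * (hat (y i) ⬝ᵥ ((skew b * A) *ᵥ hat (x i))) = 0 := by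
      have h1 : α • (A *ᵥ hat (x i)) = β • hat (y i) - b := by
        rw [← heq]; abel
      calc α * (hat (y i) ⬝ᵥ ((skew b * A) *ᵥ hat (x i)))
          = hat (y i) ⬝ᵥ (skew b *ᵥ (α • (A *ᵥ hat (x i)))) := by
            rw [hF, Matrix.mulVec_smul, dotProduct_smul, smul_eq_mul]
        _ = hat (y i) ⬝ᵥ (skew b *ᵥ (β • hat (y i) - b)) := by rw [h1]
        _ = hat (y i) ⬝ᵥ (β • (skew b *ᵥ hat (y i)) - skew b *ᵥ b) := by
            rw [Matrix.mulVec_sub, Matrix.mulVec_smul]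
        _ = β * (hat (y i) ⬝ᵥ (skew b *ᵥ hat (y i)))
              - hat (y i) ⬝ᵥ (skew b *ᵥ b) := by
            rw [dotProduct_sub, dotProduct_smul, smul_eq_mul]
        _ = 0 := by rw [dot_skew', skew_self, dotProduct_zero]; ring
    rcases mul_eq_zero.mp key with h | h
    · exact absurd h hα
    · exact h
  · have h0 : (skew b)ᵀ *ᵥ b = 0 := by
      rw [Matrix.mulVec_transpose, vecMul_skew, skew_self]
    rw [Matrix.transpose_mul, ← Matrix.mulVec_mulVec, h0, Matrix.mulVec_zero]
  · intro i hirr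
    obtain ⟨α, β, hα, hβ, heq⟩ := hpt i
    have hbb := dot_self_ne hb
    have hM : (skew b * (skew b * (skew b * A))) *ᵥ hat (x i)
        = (-(b ⬝ᵥ b)) • ((skew b * A) *ᵥ hat (x i)) := by
      have h1 : (skew b * (skew b * (skew b * A))) *ᵥ hat (x i)
          = skew b *ᵥ (skew b *ᵥ ((skew b * A) *ᵥ hat (x i))) := by
        rw [Matrix.mulVec_mulVec, Matrix.mulVec_mulVec, Matrix.mul_assoc]
      have h2 : b ⬝ᵥ ((skew b * A) *ᵥ hat (x i)) = 0 := by
        rw [hF]; exact dot_skew b _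
      rw [h1, skew_skew, h2, zero_smul, zero_sub, neg_smul]
    rcases hirr with ⟨hz, hnz⟩ | ⟨hnz, hz⟩
    · -- epipolar image zero case
      have hz' : (skew b * A) *ᵥ hat (x i) = 0 := by
        have := hM.symm.trans hz
        rcases smul_eq_zero.mp this with h | h
        · exact absurd h (by simp only [neg_eq_zero]; exact hbb)
        · exact h
      rw [hF] at hz'
      obtain ⟨lam, hlam⟩ := skew_kernel hb hz'
      have hyb : β • hat (y i) = (α * lam + 1) • b := by
        rw [← heq, hlam]; module
      have hy : hat (y i) = (β⁻¹ * (α * lam + 1)) • b := by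
        calc hat (y i) = β⁻¹ • (β • hat (y i)) := by
              rw [smul_smul, inv_mul_cancel₀ hβ, one_smul]
          _ = β⁻¹ • ((α * lam + 1) • b) := by rw [hyb]
          _ = (β⁻¹ * (α * lam + 1)) • b := smul_smul _ _ _
      apply hnz
      rw [vecMul_skew, hy, skew_smul, Matrix.smul_mulVec, skew_self, smul_zero]
    · -- epipole case
      rw [vecMul_skew] at hz
      obtain ⟨μ, hμ⟩ := skew_kernel (hat_ne_zero (y i)) hz
      have hax : α • (A *ᵥ hat (x i)) = (β - μ) • hat (y i) := by
        have : α • (A *ᵥ hat (x i)) = β • hat (y i) - b := by rw [← heq]; abel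
        rw [this, hμ]; module
      have hax' : A *ᵥ hat (x i) = (α⁻¹ * (β - μ)) • hat (y i) := by
        calc A *ᵥ hat (x i) = α⁻¹ • (α • (A *ᵥ hat (x i))) := by
              rw [smul_smul, inv_mul_cancel₀ hα, one_smul]
          _ = α⁻¹ • ((β - μ) • hat (y i)) := by rw [hax]
          _ = (α⁻¹ * (β - μ)) • hat (y i) := smul_smul _ _ _
      apply hnz
      have hFx : (skew b * A) *ᵥ hat (x i) = 0 := by
        rw [hF, hax', Matrix.mulVec_smul, hμ, skew_smul, Matrix.smul_mulVec,
          skew_self, smul_zero, smul_zero]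
      rw [hM, hFx, smul_zero]

theorem stmt14_bwd (m : ℕ) (x y : Fin m → Fin 2 → ℝ)
    (h : ∃ (F : Matrix (Fin 3) (Fin 3) ℝ) (e₂ : Fin 3 → ℝ), F.rank = 2 ∧
      (∀ i, hat (y i) ⬝ᵥ F.mulVec (hat (x i)) = 0) ∧
      e₂ ≠ 0 ∧ Fᵀ.mulVec e₂ = 0 ∧
      (∀ i, ¬ Irregular (skew e₂ * F) e₂ (x i) (y i))) :
    (∃ (A : Matrix (Fin 3) (Fin 3) ℝ) (b : Fin 3 → ℝ), IsUnit A.det ∧ b ≠ 0 ∧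
      ∃ w : Fin m → Fin 3 → ℝ, ∀ i,
        SimEq ((cam 1 0).mulVec (hat (w i))) (hat (x i)) ∧
        SimEq ((cam A b).mulVec (hat (w i))) (hat (y i))) := by
  classical
  obtain ⟨F, e, hF2, hepi, he, hFt, hreg⟩ := h
  have hee : e ⬝ᵥ e ≠ 0 := dot_self_ne he
  have heFw : ∀ z, e ⬝ᵥ (F *ᵥ z) = 0 := fun z => by
    rw [Matrix.dotProduct_mulVec, ← Matrix.mulVec_transpose, hFt, zero_dotProduct]
  obtain ⟨t, ht0, htker⟩ := ker_of_rank_two hF2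
  -- choose σ so that n = (1, σ, σ²) is non-orthogonal to t and all hat (x i)
  have hfin : ({σ : ℝ | t 0 + t 1 * σ + t 2 * σ ^ 2 = 0} ∪
      ⋃ i : Fin m, {σ : ℝ | x i 0 + x i 1 * σ + 1 * σ ^ 2 = 0}).Finite := by
    apply Set.Finite.union
    · apply quad_roots_finite
      rintro ⟨a0, a1, a2⟩
      apply ht0
      funext j; fin_cases j <;> assumption
    · apply Set.finite_iUnion
      intro i
      apply quad_roots_finite
      rintro ⟨-, -, h1⟩
      exact one_ne_zero h1
  obtain ⟨σ, hσ⟩ := hfin.infinite_compl.nonempty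
  simp only [Set.mem_compl_iff, Set.mem_union, Set.mem_iUnion, Set.mem_setOf_eq,
    not_or, not_exists] at hσ
  obtain ⟨hσt, hσx⟩ := hσ
  set n : Fin 3 → ℝ := ![1, σ, σ ^ 2] with hn
  have hnt : n ⬝ᵥ t ≠ 0 := by
    simpa [hn, dotProduct, Fin.sum_univ_three, mul_comm] using hσt
  have hnx : ∀ i, n ⬝ᵥ hat (x i) ≠ 0 := fun i => by
    have := hσx i
    simpa [hn, dotProduct, Fin.sum_univ_three, hat2_0, hat2_1, hat2_2, mul_comm] using this
  -- choose τ avoiding finitely many bad values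
  set g : Fin m → ℝ := fun i =>
    if F *ᵥ hat (x i) = 0 then (-1) / (n ⬝ᵥ hat (x i))
    else ((hat (y i) ⬝ᵥ e) * ((F *ᵥ hat (x i)) ⬝ᵥ (F *ᵥ hat (x i)))) /
      ((hat (y i) ⬝ᵥ (skew e *ᵥ (F *ᵥ hat (x i)))) * (n ⬝ᵥ hat (x i))) with hg
  obtain ⟨τ, hτ⟩ := Infinite.exists_notMem_finset
    (insert (0:ℝ) (Finset.image g Finset.univ))
  have hτ0 : τ ≠ 0 := fun h => hτ (by simp [h])
  have hτg : ∀ i, τ ≠ g i := fun i h => hτ (by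
    simp only [Finset.mem_insert, Finset.mem_image]
    exact Or.inr ⟨i, Finset.mem_univ i, h.symm⟩)
  set v : Fin 3 → ℝ := τ • n with hv
  have hvt : v ⬝ᵥ t ≠ 0 := by
    rw [hv, smul_dotProduct]
    exact smul_ne_zero hτ0 hnt
  set A : Matrix (Fin 3) (Fin 3) ℝ := skew e * F + vecMulVec e v with hA
  have hAx : ∀ z, A *ᵥ z = skew e *ᵥ (F *ᵥ z) + (v ⬝ᵥ z) • e := by
    intro z
    rw [hA, Matrix.add_mulVec, ← Matrix.mulVec_mulVec]
    congr 1
    funext i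
    simp [Matrix.mulVec, Matrix.vecMulVec_apply, dotProduct, Fin.sum_univ_three]
    ring
  have hdet : IsUnit A.det := by
    apply isUnit_det_of_ker
    intro z hz
    rw [hAx] at hz
    have h1 : v ⬝ᵥ z = 0 := by
      have h2 := congrArg (fun q => e ⬝ᵥ q) hz
      simp only [dotProduct_add, dot_skew, dotProduct_smul, smul_eq_mul,
        dotProduct_zero, zero_add] at h2
      exact by
        rcases mul_eq_zero.mp h2 with h | h
        · exact h
        · exact absurd h hee
    rw [h1, zero_smul, add_zero] at hz
    obtain ⟨μ, hμ⟩ := skew_kernel he hz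
    have hμ0 : μ = 0 := by
      have h3 := heFw z
      rw [hμ, dotProduct_smul, smul_eq_mul] at h3
      rcases mul_eq_zero.mp h3 with h | h
      · exact h
      · exact absurd h hee
    obtain ⟨ν, hν⟩ := htker z (by rw [hμ, hμ0, zero_smul])
    have hν0 : ν = 0 := by
      have h4 : v ⬝ᵥ (ν • t) = 0 := by rw [← hν]; exact h1
      rw [dotProduct_smul, smul_eq_mul] at h4
      rcases mul_eq_zero.mp h4 with h | h
      · exact h
      · exact absurd h hvt
    rw [hν, hν0, zero_smul]
  -- construct the points
  have key : ∀ i, ∃ wi : Fin 3 → ℝ,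
      SimEq ((cam 1 0).mulVec (hat wi)) (hat (x i)) ∧
      SimEq ((cam A e).mulVec (hat wi)) (hat (y i)) := by
    intro i
    set u : Fin 3 → ℝ := F *ᵥ hat (x i) with hu
    have heu : e ⬝ᵥ u = 0 := heFw _
    have hyu : hat (y i) ⬝ᵥ u = 0 := hepi i
    obtain ⟨V, hV⟩ : ∃ V, v ⬝ᵥ hat (x i) = V := ⟨_, rfl⟩
    have hVτ : V = τ * (n ⬝ᵥ hat (x i)) := by
      rw [← hV, hv, smul_dotProduct, smul_eq_mul]
    by_cases hu0 : u = 0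
    · -- degenerate: x maps to the epipole
      have hM0 : (skew e * (skew e * F)).mulVec (hat (x i)) = 0 := by
        show (skew e * (skew e * F)) *ᵥ hat (x i) = 0
        rw [← Matrix.mulVec_mulVec, ← Matrix.mulVec_mulVec, ← hu, hu0,
          Matrix.mulVec_zero, Matrix.mulVec_zero]
      have hy0 : Matrix.vecMul (hat (y i)) (skew e) = 0 := by
        by_contra hne
        exact hreg i (Or.inl ⟨hM0, hne⟩)
      rw [vecMul_skew] at hy0
      obtain ⟨μ, hμ⟩ := skew_kernel (hat_ne_zero (y i)) hy0
      have hμ0 : μ ≠ 0 := by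
        rintro rfl
        rw [zero_smul] at hμ
        exact he hμ
      have hgi : g i = -1 / (n ⬝ᵥ hat (x i)) := by
        rw [hg]
        simp only []
        rw [if_pos (show F *ᵥ hat (x i) = 0 from hu ▸ hu0)]
      have hvx1 : V + 1 ≠ 0 := by
        intro h0
        apply hτg i
        rw [hgi]
        rw [hVτ] at h0
        rw [eq_div_iff (hnx i)]
        linarith [h0]
      refine ⟨hat (x i), ⟨1, one_ne_zero, by rw [cam_one_zero, one_smul]⟩,
        ⟨(V + 1) * μ, mul_ne_zero hvx1 hμ0, ?_⟩⟩
      rw [cam_mulVec, hAx, ← hu, hu0, Matrix.mulVec_zero, zero_add, hV, hμ]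
      module
    · -- generic point
      have huu : u ⬝ᵥ u ≠ 0 := dot_self_ne hu0
      set p : Fin 3 → ℝ := skew e *ᵥ u with hp
      set c' : ℝ := hat (y i) ⬝ᵥ p with hc'
      set s' : ℝ := (hat (y i) ⬝ᵥ e) * (u ⬝ᵥ u) with hs'
      set k : ℝ := (e ⬝ᵥ e) * (u ⬝ᵥ u) with hk
      have hkne : k ≠ 0 := mul_ne_zero hee huu
      have hexp : k • hat (y i) = s' • e + c' • p := by
        have h5 := expand e u (hat (y i))
        rw [heu, hyu] at h5
        simp only [zero_mul, mul_zero, pow_two, zero_smul, add_zero, zero_add,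
          sub_zero] at h5
        rw [hk, hs', hc', hp]
        exact h5.symm
      have hMne : (skew e * (skew e * F)).mulVec (hat (x i)) ≠ 0 := by
        show (skew e * (skew e * F)) *ᵥ hat (x i) ≠ 0
        rw [← Matrix.mulVec_mulVec, ← Matrix.mulVec_mulVec, ← hu, skew_skew, heu,
          zero_smul, zero_sub]
        intro hcon
        rw [neg_eq_zero] at hcon
        rcases smul_eq_zero.mp hcon with h | h
        · exact hee h
        · exact hu0 h
      have hyne : Matrix.vecMul (hat (y i)) (skew e) ≠ 0 := by
        intro h0
        exact hreg i (Or.inr ⟨hMne, h0⟩)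
      have hc0 : c' ≠ 0 := by
        intro h0
        apply hyne
        rw [vecMul_skew]
        have hyy : hat (y i) = (s' / k) • e := by
          calc hat (y i) = k⁻¹ • (k • hat (y i)) := by
                rw [smul_smul, inv_mul_cancel₀ hkne, one_smul]
            _ = k⁻¹ • (s' • e + c' • p) := by rw [hexp]
            _ = (s' / k) • e := by
                rw [h0, zero_smul, add_zero, smul_smul]; congr 1; field_simp
        rw [hyy, skew_smul, Matrix.smul_mulVec, skew_self, smul_zero]
      have hgi : g i = s' / (c' * (n ⬝ᵥ hat (x i))) := by
        rw [hg]
        simp only []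
        rw [if_neg (show ¬ F *ᵥ hat (x i) = 0 from hu ▸ hu0)]
      have hd : c' * V - s' ≠ 0 := by
        intro h0
        apply hτg i
        rw [hgi]
        rw [hVτ] at h0
        have hne2 : c' * (n ⬝ᵥ hat (x i)) ≠ 0 := mul_ne_zero hc0 (hnx i)
        rw [eq_div_iff hne2]
        linear_combination h0
      refine ⟨(-c' / (c' * V - s')) • hat (x i),
        ⟨-c' / (c' * V - s'), div_ne_zero (neg_ne_zero.mpr hc0) hd, by rw [cam_one_zero]⟩,
        ⟨-k / (c' * V - s'), div_ne_zero (neg_ne_zero.mpr hkne) hd, ?_⟩⟩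
      rw [cam_mulVec, Matrix.mulVec_smul, hAx, ← hu, ← hp, hV]
      have hyrw : (-k / (c' * V - s')) • hat (y i)
          = ((-k / (c' * V - s')) * k⁻¹) • (s' • e + c' • p) := by
        rw [← hexp, smul_smul]
        congr 1
        field_simp
      rw [hyrw]
      match_scalars
      · field_simp
      · field_simp
        ring
  refine ⟨A, e, hdet, he, fun i => Classical.choose (key i),
    fun i => Classical.choose_spec (key i)⟩

end Stmt14Helpers

/-- Main theorem: a finite reconstruction with non-coincident cameras, the first being
`(I 0)`, exists iff there is a fundamental matrix `F` with nonzero `e₂ ∈ ker Fᵀ` such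
that all point pairs are `([e₂]ₓ F, e₂)`-regular. -/
theorem stmt14 (m : ℕ) (x y : Fin m → Fin 2 → ℝ) :
    (∃ (A : Matrix (Fin 3) (Fin 3) ℝ) (b : Fin 3 → ℝ), IsUnit A.det ∧ b ≠ 0 ∧
      ∃ w : Fin m → Fin 3 → ℝ, ∀ i,
        SimEq ((cam 1 0).mulVec (hat (w i))) (hat (x i)) ∧
        SimEq ((cam A b).mulVec (hat (w i))) (hat (y i))) ↔
    (∃ (F : Matrix (Fin 3) (Fin 3) ℝ) (e₂ : Fin 3 → ℝ), F.rank = 2 ∧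
      (∀ i, hat (y i) ⬝ᵥ F.mulVec (hat (x i)) = 0) ∧
      e₂ ≠ 0 ∧ Fᵀ.mulVec e₂ = 0 ∧
      (∀ i, ¬ Irregular (skew e₂ * F) e₂ (x i) (y i))) := by
  exact ⟨fun h => stmt14_fwd m x y h, fun h => stmt14_bwd m x y h⟩
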